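/- Truncation convergence: for u ∈ D̃ and N ∈ ℕ, the truncation u_N = ((-N) ∨ u) ∧ N belongs to D̃ and ‖u_N - u‖_o → 0 as N → ∞. -/

import Mathlib

open scoped ENNReal NNReal BigOperators
open MeasureTheory Filter

/-- A weighted graph `(b,c)` over a vertex set `V`. -/
structure WeightedGraph (V : Type*) where
  b : V → V → ℝ
  c : V → ℝ
  b_nonneg : ∀ x y, 0 ≤ b x y
  b_diag : ∀ x, b x x = 0
  b_symm : ∀ x y, b x y = b y x
  b_summable : ∀ x, Summable fun y => b x y
  c_nonneg : ∀ x, 0 ≤ c x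

/-- Membership in `ℓ²(V,m)`. -/
def MemL2 {V : Type*} (m : V → ℝ) (u : V → ℝ) : Prop :=
  Summable fun x => u x ^ 2 * m x

/-- The inner product of `ℓ²(V,m)`. -/
noncomputable def l2inner {V : Type*} (m : V → ℝ) (u v : V → ℝ) : ℝ :=
  ∑' x, u x * v x * m x

namespace WeightedGraph

variable {V : Type*} (G : WeightedGraph V)

/-- The energy functional `Q̃` with values in `[0,∞]`. -/
noncomputable def energy (u : V → ℝ) : ℝ≥0∞ :=
  (1 / 2) * ∑' p : V × V, ENNReal.ofReal (G.b p.1 p.2 * (u p.1 - u p.2) ^ 2)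
    + ∑' x, ENNReal.ofReal (G.c x * u x ^ 2)

/-- The functions of finite energy (`D̃`). -/
def FiniteEnergy (u : V → ℝ) : Prop := G.energy u < ⊤

/-- The real-valued bilinear energy form (meaningful on functions of finite energy). -/
noncomputable def energyBilin (u v : V → ℝ) : ℝ :=
  (1 / 2) * ∑' p : V × V, G.b p.1 p.2 * (u p.1 - u p.2) * (v p.1 - v p.2)
    + ∑' x, G.c x * u x * v x

/-- The generalized vertex degree. -/
noncomputable def deg (x : V) : ℝ := (∑' y, G.b x y) + G.c x

/-- The formal Laplacian `L̃` associated with `(b,c)` and the measure `m`. -/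
noncomputable def formalL (m : V → ℝ) (u : V → ℝ) (x : V) : ℝ :=
  ((∑' y, G.b x y * (u x - u y)) + G.c x * u x) / m x

/-- Connectedness of the weighted graph: any two vertices are joined by a path of edges. -/
def Connected : Prop :=
  ∀ x y : V, ∃ (n : ℕ) (p : ℕ → V), p 0 = x ∧ p n = y ∧ ∀ i < n, 0 < G.b (p i) (p (i + 1))

/-- The squared distance of the Yamasaki space with base point `o`. -/
noncomputable def ydistSq (o : V) (u v : V → ℝ) : ℝ :=
  (G.energy (fun x => u x - v x)).toReal + (u o - v o) ^ 2

/-- The domain of the regular Dirichlet form `Q^(D)`: the closure of the finitely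
supported functions in `D̃ ∩ ℓ²(V,m)` with respect to the form norm. -/
def regDom (m : V → ℝ) : Set (V → ℝ) :=
  {u | G.FiniteEnergy u ∧ MemL2 m u ∧
    ∃ f : ℕ → V → ℝ, (∀ n, (Function.support (f n)).Finite) ∧
      Filter.Tendsto
        (fun n => (G.energy (fun x => u x - f n x)).toReal + ∑' x, (u x - f n x) ^ 2 * m x)
        Filter.atTop (nhds 0)}

/-- Transience of a Dirichlet form given by its domain: existence of a strictly positive
reference function `g ∈ ℓ¹(V,m) ∩ ℓ^∞(V)` with `⟨|u|,g⟩ ≤ Q(u)^{1/2}` on the domain. -/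
def FormTransient (m : V → ℝ) (dom : Set (V → ℝ)) : Prop :=
  ∃ g : V → ℝ, (∀ x, 0 < g x) ∧ (Summable fun x => g x * m x) ∧ (∃ C, ∀ x, g x ≤ C) ∧
    ∀ u ∈ dom, ∑' x, |u x| * g x * m x ≤ Real.sqrt (G.energyBilin u u)

end WeightedGraph

/-- The data of a Dirichlet form `Q` associated with a weighted graph `(b,c)` on `ℓ²(V,m)`,
together with its semigroup `T t = e^{-tL}` and resolvent `R α = (L+α)^{-1}`, with the
standard properties: `Q` is a restriction of `Q̃` with `D(Q^(D)) ⊆ D(Q) ⊆ D(Q^(N))`,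
the semigroup is symmetric, Markovian, positivity preserving, the resolvent is characterized
by the form, and the resolvent is the Laplace transform of the semigroup. -/
structure FormSetup {V : Type*} (G : WeightedGraph V) (m : V → ℝ) where
  dom : Set (V → ℝ)
  dom_fe : ∀ u ∈ dom, G.FiniteEnergy u
  dom_l2 : ∀ u ∈ dom, MemL2 m u
  reg_sub : G.regDom m ⊆ dom
  T : ℝ → (V → ℝ) → V → ℝ
  R : ℝ → (V → ℝ) → V → ℝ
  T_linear : ∀ t, IsLinearMap ℝ (T t)
  R_linear : ∀ α, IsLinearMap ℝ (R α)
  T_semigroup : ∀ s t : ℝ, 0 < s → 0 < t → ∀ f, T (s + t) f = T s (T t f)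
  T_l2 : ∀ t : ℝ, 0 < t → ∀ f, MemL2 m f → MemL2 m (T t f)
  T_symm : ∀ t : ℝ, 0 < t → ∀ f g, MemL2 m f → MemL2 m g →
    l2inner m (T t f) g = l2inner m f (T t g)
  T_contraction : ∀ t : ℝ, 0 < t → ∀ f, MemL2 m f →
    ∑' x, T t f x ^ 2 * m x ≤ ∑' x, f x ^ 2 * m x
  T_pos : ∀ t : ℝ, 0 < t → ∀ f, (∀ x, 0 ≤ f x) → ∀ x, 0 ≤ T t f x
  T_markov : ∀ t : ℝ, 0 < t → ∀ f, (∀ x, 0 ≤ f x ∧ f x ≤ 1) →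
    ∀ x, 0 ≤ T t f x ∧ T t f x ≤ 1
  T_cont : ∀ f, MemL2 m f → ∀ x, ContinuousOn (fun t => T t f x) (Set.Ioi (0 : ℝ))
  R_mem : ∀ α : ℝ, 0 < α → ∀ f, MemL2 m f → R α f ∈ dom
  R_pos : ∀ α : ℝ, 0 < α → ∀ f, (∀ x, 0 ≤ f x) → ∀ x, 0 ≤ R α f x
  R_char : ∀ α : ℝ, 0 < α → ∀ f, MemL2 m f → ∀ v ∈ dom,
    G.energyBilin (R α f) v + α * l2inner m (R α f) v = l2inner m f v
  R_laplace : ∀ α : ℝ, 0 < α → ∀ f, MemL2 m f → (∀ x, 0 ≤ f x) → ∀ y,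
    ENNReal.ofReal (R α f y) =
      ∫⁻ t in Set.Ioi (0 : ℝ), ENNReal.ofReal (Real.exp (-α * t) * T t f y)

namespace FormSetup

variable {V : Type*} {G : WeightedGraph V} {m : V → ℝ}

open scoped Classical in
/-- The Green function `G(x,y) = ∫₀^∞ (e^{-tL} δ_x)(y) dt`, with values in `[0,∞]`. -/
noncomputable def green (S : FormSetup G m) (x y : V) : ℝ≥0∞ :=
  ∫⁻ t in Set.Ioi (0 : ℝ), ENNReal.ofReal (S.T t (fun z => if z = x then 1 else 0) y)

/-- The extended Dirichlet space `D(Q)_e`: functions which are pointwise limits of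
`Q`-Cauchy sequences from `D(Q)`. -/
def extDom (S : FormSetup G m) : Set (V → ℝ) :=
  {u | ∃ f : ℕ → V → ℝ, (∀ n, f n ∈ S.dom) ∧
    (∀ ε > (0 : ℝ), ∃ N, ∀ p ≥ N, ∀ q ≥ N,
      G.energyBilin (fun x => f p x - f q x) (fun x => f p x - f q x) < ε) ∧
    ∀ x, Filter.Tendsto (fun n => f n x) Filter.atTop (nhds (u x))}

/-- Stochastic completeness: the resolvent `(L+1)^{-1}`, extended to `ℓ^∞(V)` by monotone
limits, maps the constant function `1` to `1`. -/
def StochComplete (S : FormSetup G m) : Prop :=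
  ∀ f : ℕ → V → ℝ, (∀ n, MemL2 m (f n)) →
    (∀ n x, 0 ≤ f n x ∧ f n x ≤ f (n + 1) x ∧ f n x ≤ 1) →
    (∀ x, Filter.Tendsto (fun n => f n x) Filter.atTop (nhds 1)) →
    ∀ x, Filter.Tendsto (fun n => S.R 1 (f n) x) Filter.atTop (nhds 1)

end FormSetup

private lemma clampLip (N s t : ℝ) :
    |min (max (-N) s) N - min (max (-N) t) N| ≤ |s - t| := by
  refine (abs_min_sub_min_le_max _ _ _ _).trans ?_
  rw [max_comm (-N) s, max_comm (-N) t]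
  simp only [sub_self, abs_zero]
  exact max_le (abs_max_sub_max_le_abs s t (-N)) (abs_nonneg _)

private lemma clampSubAbs (N s : ℝ) (hN : 0 ≤ N) :
    |min (max (-N) s) N - s| ≤ |s| := by
  rcases le_total s (-N) with h | h
  · rw [max_eq_left h, min_eq_left (by linarith), abs_of_nonneg (by linarith),
      abs_of_nonpos (by linarith)]
    linarith
  · rw [max_eq_right h]
    rcases le_total s N with h2 | h2
    · simp [min_eq_left h2]
    · rw [min_eq_right h2, abs_of_nonpos (by linarith), abs_of_nonneg (by linarith)]
      linarith

private lemma clampAbs (N s : ℝ) (hN : 0 ≤ N) : |min (max (-N) s) N| ≤ |s| := by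
  rcases le_total s (-N) with h | h
  · rw [max_eq_left h, min_eq_left (by linarith), abs_neg, abs_of_nonneg hN,
      abs_of_nonpos (by linarith)]
    linarith
  · rw [max_eq_right h]
    rcases le_total s N with h2 | h2
    · rw [min_eq_left h2]
    · rw [min_eq_right h2, abs_of_nonneg hN]
      exact h2.trans (le_abs_self s)

private lemma clampEq (N s : ℝ) (h : |s| ≤ N) : min (max (-N) s) N = s := by
  rcases abs_le.mp h with ⟨h1, h2⟩
  rw [max_eq_right (by linarith), min_eq_left h2]


private lemma clampDiffSq (N s t : ℝ) :
    (min (max (-N) s) N - s - (min (max (-N) t) N - t)) ^ 2 ≤ 4 * (s - t) ^ 2 := by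
  have h2 := clampLip N s t
  set a := min (max (-N) s) N - min (max (-N) t) N with ha
  have ha2 : a ^ 2 ≤ (s - t) ^ 2 := by
    rw [← sq_abs a, ← sq_abs (s - t)]
    exact pow_le_pow_left₀ (abs_nonneg _) h2 2
  have h3 : |a * (s - t)| ≤ (s - t) ^ 2 := by
    rw [abs_mul, ← sq_abs (s - t), sq]
    exact mul_le_mul_of_nonneg_right h2 (abs_nonneg _)
  have hrw : min (max (-N) s) N - s - (min (max (-N) t) N - t) = a - (s - t) := by
    rw [ha]; ring
  rw [hrw]
  nlinarith [neg_abs_le (a * (s - t))]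


/-- truncations `u_N = ((-N) ∨ u) ∧ N` have finite energy and converge to
`u` in the Yamasaki space. -/
theorem truncation_converges {V : Type*} [Countable V] (G : WeightedGraph V)
    (hconn : G.Connected) (o : V) (u : V → ℝ) (hu : G.FiniteEnergy u) :
    (∀ N : ℕ, G.FiniteEnergy (fun x => min (max (-(N : ℝ)) (u x)) N)) ∧
      Filter.Tendsto (fun N : ℕ => G.ydistSq o (fun x => min (max (-(N : ℝ)) (u x)) N) u)
        Filter.atTop (nhds 0) := by
  have hA0 : ∀ p : V × V, 0 ≤ G.b p.1 p.2 * (u p.1 - u p.2) ^ 2 := fun p =>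
    mul_nonneg (G.b_nonneg _ _) (sq_nonneg _)
  have hB0 : ∀ x, 0 ≤ G.c x * u x ^ 2 := fun x => mul_nonneg (G.c_nonneg _) (sq_nonneg _)
  -- finiteness of the two sums for u
  have hfin := hu
  rw [WeightedGraph.FiniteEnergy, WeightedGraph.energy] at hfin
  have hboth := ENNReal.add_lt_top.mp hfin
  have hS1 : (∑' p : V × V, ENNReal.ofReal (G.b p.1 p.2 * (u p.1 - u p.2) ^ 2)) ≠ ⊤ := by
    rcases ENNReal.mul_lt_top_iff.mp hboth.1 with ⟨_, h⟩ | h | h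
    · exact h.ne
    · norm_num at h
    · simp [h]
  have hS2 : (∑' x, ENNReal.ofReal (G.c x * u x ^ 2)) ≠ ⊤ := hboth.2.ne
  have hsumA : Summable fun p : V × V => G.b p.1 p.2 * (u p.1 - u p.2) ^ 2 :=
    (ENNReal.summable_toReal hS1).congr fun p => ENNReal.toReal_ofReal (hA0 p)
  have hsumB : Summable fun x => G.c x * u x ^ 2 :=
    (ENNReal.summable_toReal hS2).congr fun x => ENNReal.toReal_ofReal (hB0 x)
  -- abbreviations
  set w : ℕ → V → ℝ := fun N x => min (max (-(N : ℝ)) (u x)) (N : ℝ) with hw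
  have hNcast : ∀ N : ℕ, (0 : ℝ) ≤ (N : ℝ) := fun N => Nat.cast_nonneg N
  -- Part 1
  have part1 : ∀ N : ℕ, G.FiniteEnergy (fun x => min (max (-(N : ℝ)) (u x)) N) := by
    intro N
    rw [WeightedGraph.FiniteEnergy]
    refine lt_of_le_of_lt ?_ hu
    rw [WeightedGraph.energy, WeightedGraph.energy]
    refine add_le_add (mul_le_mul_right (ENNReal.tsum_le_tsum fun p => ?_) _)
      (ENNReal.tsum_le_tsum fun x => ?_)
    · refine ENNReal.ofReal_le_ofReal (mul_le_mul_of_nonneg_left ?_ (G.b_nonneg _ _))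
      rw [← sq_abs (min (max _ _) _ - min (max _ _) _), ← sq_abs (u p.1 - u p.2)]
      exact pow_le_pow_left₀ (abs_nonneg _) (clampLip _ _ _) 2
    · refine ENNReal.ofReal_le_ofReal (mul_le_mul_of_nonneg_left ?_ (G.c_nonneg _))
      rw [← sq_abs (min (max _ _) _), ← sq_abs (u x)]
      exact pow_le_pow_left₀ (abs_nonneg _) (clampAbs _ _ (hNcast N)) 2
  refine ⟨part1, ?_⟩
  -- Part 2 : convergence.
  -- difference terms
  set AN : ℕ → V × V → ℝ := fun N p => G.b p.1 p.2 * (w N p.1 - u p.1 - (w N p.2 - u p.2)) ^ 2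
    with hAN
  set BN : ℕ → V → ℝ := fun N x => G.c x * (w N x - u x) ^ 2 with hBN
  have hAN0 : ∀ N p, 0 ≤ AN N p := fun N p => mul_nonneg (G.b_nonneg _ _) (sq_nonneg _)
  have hBN0 : ∀ N x, 0 ≤ BN N x := fun N x => mul_nonneg (G.c_nonneg _) (sq_nonneg _)
  have hANle : ∀ N p, AN N p ≤ 4 * (G.b p.1 p.2 * (u p.1 - u p.2) ^ 2) := by
    intro N p
    show G.b p.1 p.2 * (min (max (-(N : ℝ)) (u p.1)) (N : ℝ) - u p.1
      - (min (max (-(N : ℝ)) (u p.2)) (N : ℝ) - u p.2)) ^ 2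
      ≤ 4 * (G.b p.1 p.2 * (u p.1 - u p.2) ^ 2)
    rw [show (4 : ℝ) * (G.b p.1 p.2 * (u p.1 - u p.2) ^ 2)
      = G.b p.1 p.2 * (4 * (u p.1 - u p.2) ^ 2) by ring]
    exact mul_le_mul_of_nonneg_left (clampDiffSq _ _ _) (G.b_nonneg _ _)
  have hBNle : ∀ N x, BN N x ≤ G.c x * u x ^ 2 := by
    intro N x
    refine mul_le_mul_of_nonneg_left ?_ (G.c_nonneg _)
    rw [← sq_abs (w N x - u x), ← sq_abs (u x)]
    exact pow_le_pow_left₀ (abs_nonneg _) (clampSubAbs _ _ (hNcast N)) 2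
  -- pointwise convergence to zero
  have hwEq : ∀ (s : ℝ) (N : ℕ), |s| ≤ (N : ℝ) → min (max (-(N : ℝ)) s) (N : ℝ) = s :=
    fun s N h => clampEq _ _ h
  have hptw : ∀ x : V, ∀ᶠ N : ℕ in atTop, w N x = u x := by
    intro x
    rw [eventually_atTop]
    refine ⟨⌈|u x|⌉₊, fun N hN => ?_⟩
    exact hwEq (u x) N ((Nat.le_ceil _).trans (Nat.cast_le.mpr hN))
  have hptA : ∀ p : V × V, Tendsto (fun N => AN N p) atTop (nhds 0) := by
    intro p
    refine Tendsto.congr' ?_ tendsto_const_nhds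
    filter_upwards [hptw p.1, hptw p.2] with N h1 h2
    simp [hAN, h1, h2]
  have hptB : ∀ x : V, Tendsto (fun N => BN N x) atTop (nhds 0) := by
    intro x
    refine Tendsto.congr' ?_ tendsto_const_nhds
    filter_upwards [hptw x] with N h1
    simp [hBN, h1]
  -- dominated convergence
  have hTendA : Tendsto (fun N => ∑' p : V × V, AN N p) atTop (nhds 0) := by
    have := tendsto_tsum_of_dominated_convergence (f := AN) (g := fun _ => 0)
      (bound := fun p => 4 * (G.b p.1 p.2 * (u p.1 - u p.2) ^ 2)) (hsumA.mul_left 4) hptA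
      (Eventually.of_forall fun N p => by
        rw [Real.norm_eq_abs, abs_of_nonneg (hAN0 N p)]; exact hANle N p)
    simpa using this
  have hTendB : Tendsto (fun N => ∑' x, BN N x) atTop (nhds 0) := by
    have := tendsto_tsum_of_dominated_convergence (f := BN) (g := fun _ => 0)
      (bound := fun x => G.c x * u x ^ 2) hsumB hptB
      (Eventually.of_forall fun N x => by
        rw [Real.norm_eq_abs, abs_of_nonneg (hBN0 N x)]; exact hBNle N x)
    simpa using this
  -- summability for each N
  have hsumAN : ∀ N, Summable (AN N) := fun N =>
    Summable.of_nonneg_of_le (hAN0 N) (hANle N) (hsumA.mul_left 4)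
  have hsumBN : ∀ N, Summable (BN N) := fun N =>
    Summable.of_nonneg_of_le (hBN0 N) (hBNle N) hsumB
  -- energy of dN tends to 0 in ℝ≥0∞
  have hE : Tendsto (fun N : ℕ =>
      G.energy (fun x => min (max (-(N : ℝ)) (u x)) (N : ℝ) - u x)) atTop (nhds 0) := by
    have h1 : Tendsto (fun N => (1 / 2 : ℝ≥0∞) *
        ∑' p : V × V, ENNReal.ofReal (AN N p)) atTop (nhds 0) := by
      have hof : Tendsto (fun N => ENNReal.ofReal (∑' p : V × V, AN N p)) atTop (nhds 0) := by
        have := (ENNReal.continuous_ofReal.tendsto 0).comp hTendA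
        simpa [Function.comp_def] using this
      have heq : ∀ N, ENNReal.ofReal (∑' p : V × V, AN N p)
          = ∑' p : V × V, ENNReal.ofReal (AN N p) := fun N =>
        ENNReal.ofReal_tsum_of_nonneg (hAN0 N) (hsumAN N)
      have := ENNReal.Tendsto.const_mul (a := (1 / 2 : ℝ≥0∞)) (hof.congr heq)
        (Or.inr (by norm_num))
      simpa using this
    have h2 : Tendsto (fun N => ∑' x, ENNReal.ofReal (BN N x)) atTop (nhds 0) := by
      have hof : Tendsto (fun N => ENNReal.ofReal (∑' x, BN N x)) atTop (nhds 0) := by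
        have := (ENNReal.continuous_ofReal.tendsto 0).comp hTendB
        simpa [Function.comp_def] using this
      exact hof.congr fun N => ENNReal.ofReal_tsum_of_nonneg (hBN0 N) (hsumBN N)
    have := h1.add h2
    rw [add_zero] at this
    refine this.congr fun N => ?_
    rw [WeightedGraph.energy]
  -- pass to toReal
  have hEreal : Tendsto (fun N : ℕ =>
      (G.energy (fun x => min (max (-(N : ℝ)) (u x)) (N : ℝ) - u x)).toReal) atTop (nhds 0) := by
    have := (ENNReal.tendsto_toReal (a := 0) (by simp)).comp hE
    simpa [Function.comp_def] using this
  -- the point evaluation term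
  have hO : Tendsto (fun N : ℕ => (w N o - u o) ^ 2) atTop (nhds 0) := by
    refine Tendsto.congr' ?_ tendsto_const_nhds
    filter_upwards [hptw o] with N h1
    simp [h1]
  have := hEreal.add hO
  rw [add_zero] at this
  refine this.congr fun N => ?_
  rw [WeightedGraph.ydistSq]
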